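/- For each d ≥ 1 let ε_d be a random vector with distribution N(0, I_d), and let ℓ > 0. Then 2ℓ² · E[(‖ε_d‖²/d) · Φ(−(ℓ/2)·‖ε_d‖/√d)] → 2ℓ² · Φ(−ℓ/2) as d → ∞. (Convergence of the expected squared jumping distance of the limiting random-walk Metropolis algorithm with scaling λ = ℓ/√d and proposal covariance matched to the target covariance, as the dimension grows.) -/

import Mathlib

open MeasureTheory ProbabilityTheory Real Matrix Filter

/-- CDF of the standard normal distribution. -/
noncomputable def stdNormalCDF (x : ℝ) : ℝ :=
  ((gaussianReal 0 1) (Set.Iic x)).toReal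

/-- Quadratic form `vᵀ A v`. -/
noncomputable def quadForm {d : ℕ} (A : Matrix (Fin d) (Fin d) ℝ) (v : Fin d → ℝ) : ℝ :=
  v ⬝ᵥ (A *ᵥ v)

/-- Density of the `d`-dimensional Gaussian with mean `μ` and covariance `S`. -/
noncomputable def mvGaussianPdf {d : ℕ} (μ : Fin d → ℝ) (S : Matrix (Fin d) (Fin d) ℝ)
    (x : Fin d → ℝ) : ℝ :=
  (2 * Real.pi) ^ (-(d : ℝ) / 2) * S.det ^ (-(1 : ℝ) / 2) *
    Real.exp (-((x - μ) ⬝ᵥ (S⁻¹ *ᵥ (x - μ))) / 2)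

/-- The `d`-dimensional Gaussian distribution `N(μ, S)`. -/
noncomputable def mvGaussian {d : ℕ} (μ : Fin d → ℝ) (S : Matrix (Fin d) (Fin d) ℝ) :
    Measure (Fin d → ℝ) :=
  volume.withDensity (fun x => ENNReal.ofReal (mvGaussianPdf μ S x))




namespace EsjdAux

/-- 1-d standard normal density. -/
noncomputable def phi (t : ℝ) : ℝ := (2 * Real.pi) ^ (-(1:ℝ)/2) * Real.exp (-(1/2) * t ^ 2)

lemma phi_nonneg (t : ℝ) : 0 ≤ phi t := by
  unfold phi; positivity

lemma integrable_pow_mul_gauss (k : ℕ) :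
    Integrable (fun t : ℝ => t ^ k * Real.exp (-(1/2) * t ^ 2)) := by
  have h := integrable_rpow_mul_exp_neg_mul_sq (b := 1/2) (by norm_num)
      (s := (k : ℝ)) (lt_of_lt_of_le neg_one_lt_zero (Nat.cast_nonneg k))
  simpa [Real.rpow_natCast] using h

lemma integrable_pow_mul_phi (k : ℕ) : Integrable (fun t : ℝ => t ^ k * phi t) := by
  have h := (integrable_pow_mul_gauss k).const_mul ((2 * Real.pi) ^ (-(1:ℝ)/2))
  refine h.congr ?_
  · filter_upwards with t
    unfold phi; ring

lemma integrable_phi : Integrable phi := by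
  simpa using integrable_pow_mul_phi 0

lemma integral_gauss_pow (k : ℕ) :
    ∫ t : ℝ, t ^ (2 * k) * Real.exp (-(1/2) * t ^ 2)
      = 2 * ((1/2 : ℝ) ^ (-((2 * k : ℝ) + 1) / 2) * (1 / 2) *
          Real.Gamma (((2 * k : ℝ) + 1) / 2)) := by
  have habs : ∫ t : ℝ, t ^ (2 * k) * Real.exp (-(1/2) * t ^ 2)
      = 2 * ∫ t in Set.Ioi (0:ℝ), t ^ (2 * k) * Real.exp (-(1/2) * t ^ 2) := by
    rw [← integral_comp_abs (f := fun u : ℝ => u ^ (2 * k) * Real.exp (-(1/2) * u ^ 2))]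
    congr 1; funext t
    rw [pow_mul, pow_mul, sq_abs]
  rw [habs]
  have h := integral_rpow_mul_exp_neg_mul_rpow (p := 2) (q := (2 * k : ℝ)) (b := 1/2)
      two_pos (lt_of_lt_of_le neg_one_lt_zero (by positivity)) (by norm_num)
  rw [show ∫ t in Set.Ioi (0:ℝ), t ^ (2 * k) * Real.exp (-(1/2) * t ^ 2)
      = ∫ t in Set.Ioi (0:ℝ), t ^ ((2 * k : ℕ) : ℝ) * Real.exp (-(1/2) * t ^ ((2:ℕ) : ℝ)) by
    simp_rw [Real.rpow_natCast]]
  push_cast at h ⊢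
  rw [h]

end EsjdAux

namespace EsjdAux

lemma half_rpow (c : ℝ) : (1/2:ℝ) ^ (-(c/2)) = (2:ℝ) ^ (c/2) := by
  rw [one_div, Real.inv_rpow (by norm_num : (0:ℝ) ≤ 2),
    ← Real.rpow_neg (by norm_num : (0:ℝ) ≤ 2)]
  congr 1; ring

lemma rpow_half_1 : (2:ℝ) ^ ((1:ℝ)/2) = Real.sqrt 2 := (Real.sqrt_eq_rpow 2).symm

lemma rpow_half_3 : (2:ℝ) ^ ((3:ℝ)/2) = 2 * Real.sqrt 2 := by
  rw [show (3:ℝ)/2 = 1 + 1/2 by norm_num, Real.rpow_add (by norm_num), Real.rpow_one, rpow_half_1]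

lemma rpow_half_5 : (2:ℝ) ^ ((5:ℝ)/2) = 4 * Real.sqrt 2 := by
  rw [show (5:ℝ)/2 = 1 + 3/2 by norm_num, Real.rpow_add (by norm_num), Real.rpow_one, rpow_half_3]
  ring

lemma gamma_3_2 : Real.Gamma (3/2) = Real.sqrt Real.pi / 2 := by
  rw [show (3/2:ℝ) = 1/2 + 1 by norm_num, Real.Gamma_add_one (by norm_num),
    Real.Gamma_one_half_eq]
  ring

lemma gamma_5_2 : Real.Gamma (5/2) = 3 * Real.sqrt Real.pi / 4 := by
  rw [show (5/2:ℝ) = 3/2 + 1 by norm_num, Real.Gamma_add_one (by norm_num), gamma_3_2]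
  ring

lemma gauss0 : ∫ t : ℝ, Real.exp (-(1/2) * t ^ 2) = Real.sqrt 2 * Real.sqrt Real.pi := by
  have h := integral_gauss_pow 0
  norm_num at h
  simp only [neg_mul]
  rw [h, show (1/2 : ℝ) = (1:ℝ)/2 from rfl, half_rpow, rpow_half_1, Real.Gamma_one_half_eq]
  ring

lemma gauss2 : ∫ t : ℝ, t ^ 2 * Real.exp (-(1/2) * t ^ 2) = Real.sqrt 2 * Real.sqrt Real.pi := by
  have h := integral_gauss_pow 1
  norm_num at h
  simp only [neg_mul]
  rw [h, show (3/2 : ℝ) = (3:ℝ)/2 from rfl, half_rpow, rpow_half_3, gamma_3_2]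
  ring

lemma gauss4 : ∫ t : ℝ, t ^ 4 * Real.exp (-(1/2) * t ^ 2)
    = 3 * (Real.sqrt 2 * Real.sqrt Real.pi) := by
  have h := integral_gauss_pow 2
  norm_num at h
  simp only [neg_mul]
  rw [h, show (5/2 : ℝ) = (5:ℝ)/2 from rfl, half_rpow, rpow_half_5, gamma_5_2]
  ring

end EsjdAux

namespace EsjdAux

lemma C_mul : (2 * Real.pi) ^ (-(1:ℝ)/2) * (Real.sqrt 2 * Real.sqrt Real.pi) = 1 := by
  rw [← Real.sqrt_mul (by norm_num : (0:ℝ) ≤ 2), Real.sqrt_eq_rpow,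
    ← Real.rpow_add (by positivity), show (-(1:ℝ)/2 + 1/2) = 0 by norm_num, Real.rpow_zero]

lemma int_phi : ∫ t : ℝ, phi t = 1 := by
  unfold phi
  rw [MeasureTheory.integral_const_mul, gauss0, C_mul]

lemma int_sq_phi : ∫ t : ℝ, t ^ 2 * phi t = 1 := by
  have : (fun t : ℝ => t ^ 2 * phi t)
      = fun t => (2 * Real.pi) ^ (-(1:ℝ)/2) * (t ^ 2 * Real.exp (-(1/2) * t ^ 2)) := by
    funext t; unfold phi; ring
  rw [this, MeasureTheory.integral_const_mul, gauss2, C_mul]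

lemma int_pow4_phi : ∫ t : ℝ, t ^ 4 * phi t = 3 := by
  have : (fun t : ℝ => t ^ 4 * phi t)
      = fun t => (2 * Real.pi) ^ (-(1:ℝ)/2) * (t ^ 4 * Real.exp (-(1/2) * t ^ 2)) := by
    funext t; unfold phi; ring
  rw [this, MeasureTheory.integral_const_mul, gauss4, ← mul_assoc, mul_comm _ (3:ℝ), mul_assoc,
    C_mul, mul_one]

/-- the per-coordinate factor functions -/
lemma integrable_ite_phi (P : Prop) [Decidable P] :
    Integrable (fun t : ℝ => (if P then t ^ 2 else 1) * phi t) := by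
  by_cases h : P
  · simpa [h] using integrable_pow_mul_phi 2
  · simpa [h] using integrable_phi

lemma integrable_ite_ite_phi (P Q : Prop) [Decidable P] [Decidable Q] :
    Integrable (fun t : ℝ => (if P then t ^ 2 else 1) * ((if Q then t ^ 2 else 1) * phi t)) := by
  by_cases h : P <;> by_cases h' : Q <;>
    simp only [h, h', if_true, if_false, one_mul]
  · simpa [show ∀ t : ℝ, t ^ 2 * (t ^ 2 * phi t) = t ^ 4 * phi t from fun t => by ring]
      using integrable_pow_mul_phi 4
  · exact integrable_pow_mul_phi 2
  · exact integrable_pow_mul_phi 2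
  · exact integrable_phi

lemma int_ite_phi (P : Prop) [Decidable P] :
    ∫ t : ℝ, (if P then t ^ 2 else 1) * phi t = 1 := by
  by_cases h : P
  · simpa [h] using int_sq_phi
  · simpa [h] using int_phi

lemma int_ite_ite_phi (P Q : Prop) [Decidable P] [Decidable Q] :
    ∫ t : ℝ, (if P then t ^ 2 else 1) * ((if Q then t ^ 2 else 1) * phi t)
      = if P ∧ Q then 3 else 1 := by
  by_cases h : P <;> by_cases h' : Q <;>
    simp only [h, h', if_true, if_false, one_mul, true_and, and_false, false_and]
  · rw [show (fun t : ℝ => t ^ 2 * (t ^ 2 * phi t)) = fun t : ℝ => t ^ 4 * phi t by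
      funext t; ring]
    exact int_pow4_phi
  · exact int_sq_phi
  · exact int_sq_phi
  · exact int_phi

end EsjdAux
open scoped NNReal ENNReal

namespace EsjdAux

variable {d : ℕ}

lemma measurable_phi : Measurable phi := by
  unfold phi; fun_prop

lemma prod_phi_nonneg (x : Fin d → ℝ) : 0 ≤ ∏ j, phi (x j) :=
  Finset.prod_nonneg fun j _ => phi_nonneg _

lemma dot_eq (x : Fin d → ℝ) : x ⬝ᵥ x = ∑ i, (x i) ^ 2 := by
  simp [dotProduct, sq]

lemma dot_nonneg (x : Fin d → ℝ) : 0 ≤ x ⬝ᵥ x := by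
  rw [dot_eq]; positivity

lemma pdf_eq_prod (x : Fin d → ℝ) :
    mvGaussianPdf 0 (1 : Matrix (Fin d) (Fin d) ℝ) x = ∏ j, phi (x j) := by
  unfold mvGaussianPdf phi
  rw [inv_one, Matrix.det_one, Matrix.one_mulVec, sub_zero, Real.one_rpow, mul_one,
    dot_eq, Finset.prod_mul_distrib, Finset.prod_const, ← Real.exp_sum]
  congr 1
  · rw [← Real.rpow_natCast ((2 * Real.pi) ^ (-(1:ℝ)/2)) (Finset.card Finset.univ),
      ← Real.rpow_mul (by positivity)]
    congr 1
    simp only [Finset.card_univ, Fintype.card_fin]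
    ring
  · rw [← Finset.mul_sum]
    ring

lemma integral_mvGaussian_eq (g : (Fin d → ℝ) → ℝ) :
    ∫ x, g x ∂(mvGaussian 0 (1 : Matrix (Fin d) (Fin d) ℝ))
      = ∫ x : Fin d → ℝ, g x * ∏ j, phi (x j) := by
  unfold mvGaussian
  have hpdf : (fun x : Fin d → ℝ => ENNReal.ofReal (mvGaussianPdf 0 1 x))
      = fun x => ((Real.toNNReal (∏ j, phi (x j)) : ℝ≥0) : ℝ≥0∞) := by
    funext x; rw [pdf_eq_prod]; rfl
  have hmeas : Measurable fun x : Fin d → ℝ => Real.toNNReal (∏ j, phi (x j)) :=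
    (Finset.measurable_prod _ fun j _ =>
      measurable_phi.comp (measurable_pi_apply j)).real_toNNReal
  rw [hpdf, integral_withDensity_eq_integral_smul hmeas g]
  congr 1; funext x
  rw [NNReal.smul_def, Real.coe_toNNReal _ (prod_phi_nonneg x), smul_eq_mul, mul_comm]

lemma integrable_prod_phi : Integrable (fun x : Fin d → ℝ => ∏ j, phi (x j)) :=
  Integrable.fintype_prod (f := fun _ => phi) fun _ => integrable_phi

lemma int_prod_phi : ∫ x : Fin d → ℝ, ∏ j, phi (x j) = 1 := by
  rw [integral_fintype_prod_volume_eq_pow phi, int_phi, one_pow]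

lemma integrable_prod_ite (i : Fin d) :
    Integrable (fun x : Fin d → ℝ => ∏ j, (if j = i then (x j) ^ 2 else 1) * phi (x j)) :=
  Integrable.fintype_prod (f := fun j t => (if j = i then t ^ 2 else 1) * phi t)
    fun j => integrable_ite_phi _

lemma integrable_prod_ite_ite (i i' : Fin d) :
    Integrable (fun x : Fin d → ℝ =>
      ∏ j, (if j = i then (x j) ^ 2 else 1) * ((if j = i' then (x j) ^ 2 else 1) * phi (x j))) :=
  Integrable.fintype_prod
    (f := fun j t => (if j = i then t ^ 2 else 1) * ((if j = i' then t ^ 2 else 1) * phi t))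
    fun j => integrable_ite_ite_phi _ _

lemma sq_mul_prod (x : Fin d → ℝ) (i : Fin d) :
    (x i) ^ 2 * ∏ j, phi (x j) = ∏ j, (if j = i then (x j) ^ 2 else 1) * phi (x j) := by
  rw [Finset.prod_mul_distrib, Finset.prod_ite_eq' Finset.univ i (fun j => (x j) ^ 2)]
  simp

lemma sqsq_mul_prod (x : Fin d → ℝ) (i i' : Fin d) :
    (x i) ^ 2 * ((x i') ^ 2 * ∏ j, phi (x j))
      = ∏ j, (if j = i then (x j) ^ 2 else 1) * ((if j = i' then (x j) ^ 2 else 1) * phi (x j)) := by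
  rw [Finset.prod_mul_distrib, Finset.prod_mul_distrib,
    Finset.prod_ite_eq' Finset.univ i (fun j => (x j) ^ 2),
    Finset.prod_ite_eq' Finset.univ i' (fun j => (x j) ^ 2)]
  simp [mul_assoc]

lemma S_mul_prod_eq (x : Fin d → ℝ) :
    (∑ i, (x i) ^ 2) * ∏ j, phi (x j)
      = ∑ i, ∏ j, (if j = i then (x j) ^ 2 else 1) * phi (x j) := by
  rw [Finset.sum_mul]
  exact Finset.sum_congr rfl fun i _ => sq_mul_prod x i

lemma S2_mul_prod_eq (x : Fin d → ℝ) :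
    (∑ i, (x i) ^ 2) ^ 2 * ∏ j, phi (x j)
      = ∑ i, ∑ i', ∏ j,
          (if j = i then (x j) ^ 2 else 1) * ((if j = i' then (x j) ^ 2 else 1) * phi (x j)) := by
  rw [sq, Finset.sum_mul_sum, Finset.sum_mul]
  refine Finset.sum_congr rfl fun i _ => ?_
  rw [Finset.sum_mul]
  refine Finset.sum_congr rfl fun i' _ => ?_
  rw [mul_assoc]
  exact sqsq_mul_prod x i i'

lemma integrable_S_prod :
    Integrable (fun x : Fin d → ℝ => (∑ i, (x i) ^ 2) * ∏ j, phi (x j)) := by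
  rw [show (fun x : Fin d → ℝ => (∑ i, (x i) ^ 2) * ∏ j, phi (x j))
      = fun x => ∑ i, ∏ j, (if j = i then (x j) ^ 2 else 1) * phi (x j) from
    funext fun x => S_mul_prod_eq x]
  exact integrable_finset_sum _ fun i _ => integrable_prod_ite i

lemma integrable_S2_prod :
    Integrable (fun x : Fin d → ℝ => (∑ i, (x i) ^ 2) ^ 2 * ∏ j, phi (x j)) := by
  rw [show (fun x : Fin d → ℝ => (∑ i, (x i) ^ 2) ^ 2 * ∏ j, phi (x j))
      = fun x => ∑ i, ∑ i', ∏ j,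
          (if j = i then (x j) ^ 2 else 1) * ((if j = i' then (x j) ^ 2 else 1) * phi (x j)) from
    funext fun x => S2_mul_prod_eq x]
  exact integrable_finset_sum _ fun i _ =>
    integrable_finset_sum _ fun i' _ => integrable_prod_ite_ite i i'

lemma int_S_prod :
    ∫ x : Fin d → ℝ, (∑ i, (x i) ^ 2) * ∏ j, phi (x j) = d := by
  rw [show (fun x : Fin d → ℝ => (∑ i, (x i) ^ 2) * ∏ j, phi (x j))
      = fun x => ∑ i, ∏ j, (if j = i then (x j) ^ 2 else 1) * phi (x j) from
    funext fun x => S_mul_prod_eq x]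
  rw [integral_finset_sum _ fun i _ => integrable_prod_ite i]
  have h : ∀ i : Fin d,
      (∫ x : Fin d → ℝ, ∏ j, (if j = i then (x j) ^ 2 else 1) * phi (x j)) = 1 := by
    intro i
    rw [integral_fintype_prod_volume_eq_prod (fun j t => (if j = i then t ^ 2 else 1) * phi t)]
    rw [Finset.prod_congr rfl fun j _ => int_ite_phi (j = i)]
    exact Finset.prod_const_one
  rw [Finset.sum_congr rfl fun i _ => h i]
  simp

lemma int_S2_prod :
    ∫ x : Fin d → ℝ, (∑ i, (x i) ^ 2) ^ 2 * ∏ j, phi (x j) = (d:ℝ) ^ 2 + 2 * d := by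
  rw [show (fun x : Fin d → ℝ => (∑ i, (x i) ^ 2) ^ 2 * ∏ j, phi (x j))
      = fun x => ∑ i, ∑ i', ∏ j,
          (if j = i then (x j) ^ 2 else 1) * ((if j = i' then (x j) ^ 2 else 1) * phi (x j)) from
    funext fun x => S2_mul_prod_eq x]
  rw [integral_finset_sum _ fun i _ =>
    integrable_finset_sum _ fun i' _ => integrable_prod_ite_ite i i']
  rw [Finset.sum_congr rfl fun i _ =>
    integral_finset_sum _ fun i' _ => integrable_prod_ite_ite i i']
  have h : ∀ i i' : Fin d,
      (∫ x : Fin d → ℝ, ∏ j,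
        (if j = i then (x j) ^ 2 else 1) * ((if j = i' then (x j) ^ 2 else 1) * phi (x j)))
      = if i = i' then (3:ℝ) else 1 := by
    intro i i'
    rw [integral_fintype_prod_volume_eq_prod
      (fun j t => (if j = i then t ^ 2 else 1) * ((if j = i' then t ^ 2 else 1) * phi t))]
    rw [Finset.prod_congr rfl fun j _ => int_ite_ite_phi (j = i) (j = i')]
    by_cases hii : i = i'
    · subst hii
      simp only [and_self]
      rw [Finset.prod_ite_eq' Finset.univ i (fun _ => (3:ℝ))]
      simp
    · rw [if_neg hii]
      refine Finset.prod_eq_one fun j _ => if_neg ?_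
      rintro ⟨rfl, rfl⟩
      exact hii rfl
  have hsum : ∀ i : Fin d, ∑ i', (if i = i' then (3:ℝ) else 1) = (d:ℝ) + 2 := by
    intro i
    have : ∀ i' : Fin d, (if i = i' then (3:ℝ) else 1) = 1 + (if i = i' then (2:ℝ) else 0) :=
      fun i' => by by_cases h' : i = i' <;> simp [h'] <;> norm_num
    rw [Finset.sum_congr rfl fun i' _ => this i', Finset.sum_add_distrib,
      Finset.sum_ite_eq Finset.univ i (fun _ => (2:ℝ))]
    simp
    try ring
  calc ∑ i : Fin d, ∑ i' : Fin d, (∫ x : Fin d → ℝ, ∏ j,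
        (if j = i then (x j) ^ 2 else 1) * ((if j = i' then (x j) ^ 2 else 1) * phi (x j)))
      = ∑ i : Fin d, ((d:ℝ) + 2) := by
        refine Finset.sum_congr rfl fun i _ => ?_
        rw [Finset.sum_congr rfl fun i' _ => h i i', hsum i]
    _ = (d:ℝ) ^ 2 + 2 * d := by
        simp [Finset.sum_const]
        try ring

end EsjdAux

namespace EsjdAux

lemma stdNormalCDF_nonneg (x : ℝ) : 0 ≤ stdNormalCDF x := ENNReal.toReal_nonneg

lemma stdNormalCDF_le_one (x : ℝ) : stdNormalCDF x ≤ 1 := by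
  have h := prob_le_one (μ := gaussianReal 0 1) (s := Set.Iic x)
  have := ENNReal.toReal_mono (by simp) h
  simpa [stdNormalCDF] using this

lemma stdNormalCDF_mono : Monotone stdNormalCDF := fun a b hab =>
  ENNReal.toReal_mono (measure_ne_top _ _) (measure_mono (Set.Iic_subset_Iic.2 hab))

lemma measurable_stdNormalCDF : Measurable stdNormalCDF := stdNormalCDF_mono.measurable

lemma gaussianPDF_le_one (x : ℝ) : gaussianPDF 0 1 x ≤ 1 := by
  rw [gaussianPDF]
  refine ENNReal.ofReal_le_one.2 ?_
  rw [gaussianPDFReal]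
  have h1 : 1 ≤ Real.sqrt (2 * Real.pi * (1:ℝ≥0)) := by
    rw [← Real.sqrt_one]
    exact Real.sqrt_le_sqrt (by push_cast; nlinarith [Real.pi_gt_three])
  have h2 : Real.exp (-(x - 0) ^ 2 / (2 * (1:ℝ≥0))) ≤ 1 := by
    rw [Real.exp_le_one_iff]
    push_cast
    nlinarith [sq_nonneg (x - 0)]
  calc (Real.sqrt (2 * Real.pi * (1:ℝ≥0)))⁻¹ * Real.exp (-(x - 0) ^ 2 / (2 * (1:ℝ≥0)))
      ≤ 1 * 1 := by
        refine mul_le_mul ?_ h2 (Real.exp_nonneg _) one_pos.le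
        exact inv_le_one_of_one_le₀ h1
    _ = 1 := by norm_num

lemma stdNormalCDF_lipschitz (a b : ℝ) : |stdNormalCDF a - stdNormalCDF b| ≤ |a - b| := by
  wlog hab : b ≤ a generalizing a b
  · rw [abs_sub_comm, abs_sub_comm a b]; exact this b a (le_of_not_ge hab)
  rw [abs_of_nonneg (sub_nonneg.2 (stdNormalCDF_mono hab)), abs_of_nonneg (sub_nonneg.2 hab)]
  have hsplit : (gaussianReal 0 1) (Set.Iic a)
      = (gaussianReal 0 1) (Set.Iic b) + (gaussianReal 0 1) (Set.Ioc b a) := by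
    rw [← measure_union (Set.Iic_disjoint_Ioc le_rfl) measurableSet_Ioc,
      Set.Iic_union_Ioc_eq_Iic hab]
  have hble : (gaussianReal 0 1) (Set.Ioc b a) ≤ ENNReal.ofReal (a - b) := by
    rw [gaussianReal_apply 0 (by norm_num) _]
    calc ∫⁻ x in Set.Ioc b a, gaussianPDF 0 1 x
        ≤ ∫⁻ _ in Set.Ioc b a, 1 := lintegral_mono fun x => gaussianPDF_le_one x
      _ = volume (Set.Ioc b a) := by simp
      _ = ENNReal.ofReal (a - b) := Real.volume_Ioc
  unfold stdNormalCDF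
  rw [hsplit, ENNReal.toReal_add (measure_ne_top _ _) (measure_ne_top _ _), add_sub_cancel_left]
  exact ENNReal.toReal_le_of_le_ofReal (by linarith) hble

lemma abs_le_quad {a t : ℝ} (ht : 0 < t) : |a| ≤ a ^ 2 / (2 * t) + t / 2 := by
  rw [div_add_div _ _ (by positivity : (2:ℝ) * t ≠ 0) (by norm_num : (2:ℝ) ≠ 0),
    le_div_iff₀ (by positivity)]
  nlinarith [sq_nonneg (|a| - t), sq_abs a, abs_nonneg a]

lemma f_bound {c : ℝ} (hc : 0 ≤ c) {s : ℝ} (hs : 0 ≤ s) :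
    |s * stdNormalCDF (-(c * Real.sqrt s)) - stdNormalCDF (-c)| ≤ (1 + c) * |s - 1| := by
  have hsq : 0 ≤ Real.sqrt s := Real.sqrt_nonneg s
  have h1 : |Real.sqrt s - 1| ≤ |s - 1| := by
    have hfac : (Real.sqrt s - 1) * (Real.sqrt s + 1) = s - 1 := by
      have := Real.sq_sqrt hs; nlinarith
    calc |Real.sqrt s - 1| ≤ |Real.sqrt s - 1| * (Real.sqrt s + 1) :=
          le_mul_of_one_le_right (abs_nonneg _) (by linarith)
      _ = |(Real.sqrt s - 1) * (Real.sqrt s + 1)| := by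
          rw [abs_mul, abs_of_nonneg (by linarith : (0:ℝ) ≤ Real.sqrt s + 1)]
      _ = |s - 1| := by rw [hfac]
  have h2 : |stdNormalCDF (-(c * Real.sqrt s)) - stdNormalCDF (-c)| ≤ c * |s - 1| := by
    calc |stdNormalCDF (-(c * Real.sqrt s)) - stdNormalCDF (-c)|
        ≤ |(-(c * Real.sqrt s)) - (-c)| := stdNormalCDF_lipschitz _ _
      _ = c * |Real.sqrt s - 1| := by
          rw [show -(c * Real.sqrt s) - -c = -(c * (Real.sqrt s - 1)) by ring, abs_neg, abs_mul,
            abs_of_nonneg hc]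
      _ ≤ c * |s - 1| := mul_le_mul_of_nonneg_left h1 hc
  calc |s * stdNormalCDF (-(c * Real.sqrt s)) - stdNormalCDF (-c)|
      = |(s - 1) * stdNormalCDF (-(c * Real.sqrt s))
          + (stdNormalCDF (-(c * Real.sqrt s)) - stdNormalCDF (-c))| := by ring_nf
    _ ≤ |(s - 1) * stdNormalCDF (-(c * Real.sqrt s))|
          + |stdNormalCDF (-(c * Real.sqrt s)) - stdNormalCDF (-c)| := abs_add_le _ _
    _ ≤ |s - 1| * 1 + c * |s - 1| := by
        refine add_le_add ?_ h2
        rw [abs_mul]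
        exact mul_le_mul_of_nonneg_left (by
          rw [abs_of_nonneg (stdNormalCDF_nonneg _)]; exact stdNormalCDF_le_one _) (abs_nonneg _)
    _ = (1 + c) * |s - 1| := by ring

end EsjdAux

/-- Convergence of the ESJD of the limiting RWM with scaling `λ = ℓ/√d` and proposal
covariance matched to the target covariance: for `ε_d ∼ N(0, I_d)`,
`2ℓ² E[(‖ε_d‖²/d) Φ(−(ℓ/2)‖ε_d‖/√d)] → 2ℓ² Φ(−ℓ/2)` as `d → ∞`. -/
theorem esjd_tendsto_high_dim (l : ℝ) (hl : 0 < l) :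
    Tendsto (fun d : ℕ =>
        2 * l ^ 2 * ∫ x : Fin d → ℝ,
          ((x ⬝ᵥ x) / (d : ℝ)) *
            stdNormalCDF (-(l / 2) * (Real.sqrt (x ⬝ᵥ x) / Real.sqrt (d : ℝ)))
          ∂(mvGaussian 0 1))
      atTop (nhds (2 * l ^ 2 * stdNormalCDF (-(l / 2)))) := by
  open EsjdAux in
  have key : ∀ d : ℕ, 1 ≤ d →
      |(∫ x : Fin d → ℝ,
          ((x ⬝ᵥ x) / (d : ℝ)) *
            stdNormalCDF (-(l / 2) * (Real.sqrt (x ⬝ᵥ x) / Real.sqrt (d : ℝ)))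
          ∂(mvGaussian 0 1)) - stdNormalCDF (-(l / 2))|
        ≤ (1 + l / 2) * Real.sqrt (2 / d) := by
    intro d hd
    have hd0 : (0:ℝ) < d := by exact_mod_cast hd
    set S : (Fin d → ℝ) → ℝ := fun x => ∑ i, (x i) ^ 2 with hS
    set ρ : (Fin d → ℝ) → ℝ := fun x => ∏ j, phi (x j) with hρ
    set t : ℝ := Real.sqrt (2 / d) with hT
    have ht : 0 < t := Real.sqrt_pos.2 (by positivity)
    have ht2 : t ^ 2 = 2 / d := Real.sq_sqrt (by positivity)
    set F : (Fin d → ℝ) → ℝ :=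
      fun x => (S x / d) * stdNormalCDF (-(l / 2 * Real.sqrt (S x / d))) with hF
    have hS_nonneg : ∀ x, 0 ≤ S x := fun x => by positivity
    have hρ_nonneg : ∀ x, 0 ≤ ρ x := fun x => prod_phi_nonneg x
    -- rewrite the integral
    have hrw : (∫ x : Fin d → ℝ,
          ((x ⬝ᵥ x) / (d : ℝ)) *
            stdNormalCDF (-(l / 2) * (Real.sqrt (x ⬝ᵥ x) / Real.sqrt (d : ℝ)))
          ∂(mvGaussian 0 1))
        = ∫ x : Fin d → ℝ, F x * ρ x := by
      rw [integral_mvGaussian_eq]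
      refine integral_congr_ae (ae_of_all _ fun x => ?_)
      show (x ⬝ᵥ x) / (d:ℝ) * stdNormalCDF (-(l / 2) * (Real.sqrt (x ⬝ᵥ x) / Real.sqrt (d:ℝ)))
            * (∏ j, phi (x j))
          = ((∑ i, (x i) ^ 2) / (d:ℝ)
              * stdNormalCDF (-(l / 2 * Real.sqrt ((∑ i, (x i) ^ 2) / (d:ℝ)))))
            * (∏ j, phi (x j))
      rw [dot_eq x, ← Real.sqrt_div (by positivity : (0:ℝ) ≤ ∑ i, (x i) ^ 2) (d:ℝ), neg_mul]
    -- measurability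
    have hmS : Measurable S := by
      apply Finset.measurable_sum
      intro i _
      exact (measurable_pi_apply i).pow_const 2
    have hmρ : Measurable ρ := Finset.measurable_prod _ fun j _ =>
      measurable_phi.comp (measurable_pi_apply j)
    have hmF : Measurable F := by
      refine ((hmS.div_const d).mul (measurable_stdNormalCDF.comp ?_))
      exact (((Real.continuous_sqrt.measurable.comp (hmS.div_const d)).const_mul (l/2)).neg)
    -- integrability
    have iρ : Integrable ρ := integrable_prod_phi
    have iSρ : Integrable (fun x => S x * ρ x) := integrable_S_prod
    have iS2ρ : Integrable (fun x => (S x) ^ 2 * ρ x) := integrable_S2_prod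
    have iquad : Integrable (fun x => (S x / d - 1) ^ 2 * ρ x) := by
      have heq : (fun x => (S x / d - 1) ^ 2 * ρ x)
          = fun x => (1 / (d:ℝ) ^ 2) * ((S x) ^ 2 * ρ x) - (2 / d) * (S x * ρ x) + ρ x := by
        funext x; field_simp; ring
      rw [heq]
      exact ((iS2ρ.const_mul _).sub (iSρ.const_mul _)).add iρ
    have ivquad : ∫ x : Fin d → ℝ, (S x / d - 1) ^ 2 * ρ x = (2:ℝ) / d := by
      have heq : (fun x : Fin d → ℝ => (S x / d - 1) ^ 2 * ρ x)
          = fun x => (1 / (d:ℝ) ^ 2) * ((S x) ^ 2 * ρ x) - (2 / d) * (S x * ρ x) + ρ x := by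
        funext x; field_simp; ring
      have ia : Integrable (fun x : Fin d → ℝ => 1 / (d:ℝ) ^ 2 * (S x ^ 2 * ρ x)) :=
        iS2ρ.const_mul _
      have ib : Integrable (fun x : Fin d → ℝ => 2 / (d:ℝ) * (S x * ρ x)) := iSρ.const_mul _
      have iab : Integrable (fun x : Fin d → ℝ =>
          1 / (d:ℝ) ^ 2 * (S x ^ 2 * ρ x) - 2 / (d:ℝ) * (S x * ρ x)) := ia.sub ib
      rw [heq, integral_add iab iρ, integral_sub ia ib, integral_const_mul, integral_const_mul]
      simp only [hS, hρ]
      rw [int_prod_phi, int_S_prod, int_S2_prod]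
      field_simp
      ring
    have iF : Integrable (fun x => F x * ρ x) := by
      refine Integrable.mono' (iSρ.const_mul (1 / (d:ℝ))) ((hmF.mul hmρ).aestronglyMeasurable)
        (ae_of_all _ fun x => ?_)
      have h1 : 0 ≤ stdNormalCDF (-(l / 2 * Real.sqrt (S x / d))) := stdNormalCDF_nonneg _
      have h2 : stdNormalCDF (-(l / 2 * Real.sqrt (S x / d))) ≤ 1 := stdNormalCDF_le_one _
      have h3 : 0 ≤ S x / d := by positivity
      have hFx : F x = S x / d * stdNormalCDF (-(l / 2 * Real.sqrt (S x / d))) := rfl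
      rw [Real.norm_eq_abs, hFx,
        abs_of_nonneg (mul_nonneg (mul_nonneg h3 h1) (hρ_nonneg x))]
      calc S x / d * stdNormalCDF (-(l / 2 * Real.sqrt (S x / d))) * ρ x
          ≤ S x / d * 1 * ρ x := by
            refine mul_le_mul_of_nonneg_right ?_ (hρ_nonneg x)
            exact mul_le_mul_of_nonneg_left h2 h3
        _ = 1 / (d:ℝ) * (S x * ρ x) := by ring
    -- the constant
    have hconst : stdNormalCDF (-(l / 2)) = ∫ x : Fin d → ℝ, stdNormalCDF (-(l / 2)) * ρ x := by
      rw [integral_const_mul]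
      simp only [hρ]
      rw [int_prod_phi, mul_one]
    rw [hrw, hconst, ← integral_sub iF (iρ.const_mul _)]
    have hsub : (fun x : Fin d → ℝ => F x * ρ x - stdNormalCDF (-(l / 2)) * ρ x)
        = fun x => (F x - stdNormalCDF (-(l / 2))) * ρ x := by
      funext x; ring
    rw [hsub]
    -- bound
    have hptbound : ∀ x : Fin d → ℝ, |(F x - stdNormalCDF (-(l / 2))) * ρ x|
        ≤ (1 + l / 2) * (((S x / d - 1) ^ 2 / (2 * t) + t / 2) * ρ x) := by
      intro x
      rw [abs_mul, abs_of_nonneg (hρ_nonneg x)]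
      have hb1 : |F x - stdNormalCDF (-(l / 2))| ≤ (1 + l / 2) * |S x / d - 1| := by
        have := f_bound (c := l/2) (by positivity) (s := S x / d) (by positivity)
        exact this
      have hb2 : |S x / d - 1| ≤ (S x / d - 1) ^ 2 / (2 * t) + t / 2 := abs_le_quad ht
      calc |F x - stdNormalCDF (-(l / 2))| * ρ x
          ≤ ((1 + l / 2) * |S x / d - 1|) * ρ x :=
            mul_le_mul_of_nonneg_right hb1 (hρ_nonneg x)
        _ ≤ ((1 + l / 2) * ((S x / d - 1) ^ 2 / (2 * t) + t / 2)) * ρ x := by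
            refine mul_le_mul_of_nonneg_right ?_ (hρ_nonneg x)
            exact mul_le_mul_of_nonneg_left hb2 (by positivity)
        _ = (1 + l / 2) * (((S x / d - 1) ^ 2 / (2 * t) + t / 2) * ρ x) := by ring
    have iRHS : Integrable (fun x : Fin d → ℝ =>
        (1 + l / 2) * (((S x / d - 1) ^ 2 / (2 * t) + t / 2) * ρ x)) := by
      have heq : (fun x : Fin d → ℝ =>
            (1 + l / 2) * (((S x / d - 1) ^ 2 / (2 * t) + t / 2) * ρ x))
          = fun x => (1 + l / 2) * ((1 / (2 * t)) * ((S x / d - 1) ^ 2 * ρ x) + (t / 2) * ρ x) := by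
        funext x; ring
      rw [heq]
      exact (((iquad.const_mul _).add (iρ.const_mul _)).const_mul _)
    calc |∫ x : Fin d → ℝ, (F x - stdNormalCDF (-(l / 2))) * ρ x|
        ≤ ∫ x : Fin d → ℝ, |(F x - stdNormalCDF (-(l / 2))) * ρ x| :=
          by
            simpa only [Real.norm_eq_abs] using norm_integral_le_integral_norm
              (fun x => (F x - stdNormalCDF (-(l / 2))) * ρ x)
      _ ≤ ∫ x : Fin d → ℝ,
            (1 + l / 2) * (((S x / d - 1) ^ 2 / (2 * t) + t / 2) * ρ x) := by
          refine integral_mono_of_nonneg (ae_of_all _ fun x => abs_nonneg _) iRHS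
            (ae_of_all _ fun x => hptbound x)
      _ = (1 + l / 2) * Real.sqrt (2 / d) := by
          have heq : (fun x : Fin d → ℝ =>
                (1 + l / 2) * (((S x / d - 1) ^ 2 / (2 * t) + t / 2) * ρ x))
              = fun x => (1 + l / 2) * ((1 / (2 * t)) * ((S x / d - 1) ^ 2 * ρ x)
                  + (t / 2) * ρ x) := by
            funext x; ring
          rw [heq, integral_const_mul, integral_add (iquad.const_mul _) (iρ.const_mul _),
            integral_const_mul, integral_const_mul, ivquad]
          simp only [hρ]
          rw [int_prod_phi, mul_one, show (2:ℝ) / (d:ℝ) = t ^ 2 from ht2.symm]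
          rw [Real.sqrt_sq ht.le]
          field_simp
          ring
    done
  -- limit of the bound
  have hb : Tendsto (fun d : ℕ => (1 + l / 2) * Real.sqrt (2 / d)) atTop (nhds 0) := by
    have h2d : Tendsto (fun d : ℕ => (2:ℝ) / d) atTop (nhds 0) :=
      tendsto_const_div_atTop_nhds_zero_nat 2
    have hsq : Tendsto (fun d : ℕ => Real.sqrt (2 / d)) atTop (nhds 0) := by
      have := (Real.continuous_sqrt.tendsto 0).comp h2d
      simpa only [Function.comp_def, Real.sqrt_zero] using this
    simpa only [mul_zero] using hsq.const_mul (1 + l / 2)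
  have hmain : Tendsto (fun d : ℕ =>
      ∫ x : Fin d → ℝ,
        ((x ⬝ᵥ x) / (d : ℝ)) *
          stdNormalCDF (-(l / 2) * (Real.sqrt (x ⬝ᵥ x) / Real.sqrt (d : ℝ)))
        ∂(mvGaussian 0 1)) atTop (nhds (stdNormalCDF (-(l / 2)))) := by
    rw [tendsto_iff_dist_tendsto_zero]
    refine squeeze_zero' (Filter.Eventually.of_forall fun d => dist_nonneg) ?_ hb
    filter_upwards [eventually_ge_atTop 1] with d hd
    rw [Real.dist_eq]
    exact key d hd
  exact hmain.const_mul (2 * l ^ 2)
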